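/- With f(t) = 1 − (1+2r(t))^{3/2}/(r₀√(1+2r₀)(1+r(t))) + (1+r₀−r₀²)(1+2r(t))/(r₀(1+2r₀)(1+r(t))) and r the equilibrium ODE solution with r(0) = r₀ > 0, r(T−) = 0, one has f''(0) = −σ_w⁴r₀⁴/(σ_a⁴(1+3r₀)) < 0 and f''(T−) = (3σ_w⁴r₀³(1+2r₀)²/(σ_a⁴(1+r₀)⁴))·(√(1+2r₀) − 1 + r₀(r₀−1)) > 0. -/

import Mathlib

open Set Filter

noncomputable def vA (r₀ : ℝ) : ℝ := 1 / (r₀ * Real.sqrt (1 + 2 * r₀))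
noncomputable def vB (r₀ : ℝ) : ℝ := (1 + r₀ - r₀ ^ 2) / (r₀ * (1 + 2 * r₀))
noncomputable def vC (r₀ σa σw : ℝ) : ℝ :=
  σw ^ 2 * r₀ ^ 2 * (1 + 2 * r₀) * Real.sqrt (1 + 2 * r₀) / (σa ^ 2 * (1 + r₀) ^ 2)

noncomputable def Ffun (r₀ : ℝ) (x : ℝ) : ℝ :=
  1 - (1 + 2 * x) * Real.sqrt (1 + 2 * x) / (r₀ * Real.sqrt (1 + 2 * r₀) * (1 + x)) +
    (1 + r₀ - r₀ ^ 2) * (1 + 2 * x) / (r₀ * (1 + 2 * r₀) * (1 + x))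

noncomputable def vfun (r₀ σa σw x : ℝ) : ℝ :=
  -(vC r₀ σa σw * (1 + x) ^ 3 / ((1 + 3 * x) * Real.sqrt (1 + 2 * x)))

noncomputable def Hfun (r₀ σa σw x : ℝ) : ℝ :=
  vC r₀ σa σw * ((1 + x) * (vA r₀ * (2 + x) - vB r₀ / Real.sqrt (1 + 2 * x)) / (1 + 3 * x))

noncomputable def Gfun (r₀ σa σw x : ℝ) : ℝ :=
  -(vC r₀ σa σw ^ 2 * (1 + x) ^ 3 / (1 + 3 * x) ^ 3 *
    (vA r₀ * (3 * x ^ 2 + 2 * x - 3) / Real.sqrt (1 + 2 * x) +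
      vB r₀ * (3 * x ^ 2 + 8 * x + 3) / (1 + 2 * x) ^ 2))

lemma rpow32 {y : ℝ} (hy : 0 ≤ y) : y ^ ((3 : ℝ) / 2) = y * Real.sqrt y := by
  have h : (3 : ℝ) / 2 = 1 + 1 / 2 := by norm_num
  rw [h, Real.rpow_add' hy (by norm_num), Real.rpow_one, Real.sqrt_eq_rpow]

lemma deriv_uniq {T : ℝ} {g φ : ℝ → ℝ} {t a b : ℝ} (ht : t ∈ Set.Ico 0 T)
    (heq : ∀ s ∈ Set.Ico 0 T, g s = φ s) (hg : HasDerivAt g a t) (hφ : HasDerivAt φ b t) :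
    a = b := by
  have h1 : HasDerivWithinAt φ a (Set.Ico 0 T) t :=
    hg.hasDerivWithinAt.congr (fun y hy => (heq y hy).symm) (heq t ht).symm
  have h2 := h1.derivWithin (uniqueDiffOn_Ico 0 T t ht)
  have h3 := hφ.hasDerivWithinAt.derivWithin (uniqueDiffOn_Ico 0 T t ht)
  rw [← h2, ← h3]

lemma hdF {r₀ x : ℝ} (hr₀ : 0 < r₀) (hx : 0 < x) :
    HasDerivAt (Ffun r₀)
      ((-(vA r₀) * Real.sqrt (1 + 2 * x) * (2 + x) + vB r₀) / (1 + x) ^ 2) x := by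
  have h12x : (0:ℝ) < 1 + 2 * x := by linarith
  have h12r : (0:ℝ) < 1 + 2 * r₀ := by linarith
  have hs : Real.sqrt (1 + 2 * x) ^ 2 = 1 + 2 * x := Real.sq_sqrt h12x.le
  have hspos : 0 < Real.sqrt (1 + 2 * x) := Real.sqrt_pos.mpr h12x
  have htpos : 0 < Real.sqrt (1 + 2 * r₀) := Real.sqrt_pos.mpr h12r
  have h1x : (0:ℝ) < 1 + x := by linarith
  have hlin : HasDerivAt (fun y : ℝ => 1 + 2 * y) 2 x := by
    simpa using ((hasDerivAt_id x).const_mul (2:ℝ)).const_add (1:ℝ)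
  have hsq : HasDerivAt (fun y : ℝ => Real.sqrt (1 + 2 * y))
      (2 / (2 * Real.sqrt (1 + 2 * x))) x := hlin.sqrt h12x.ne'
  have hnum : HasDerivAt (fun y : ℝ => (1 + 2 * y) * Real.sqrt (1 + 2 * y))
      (3 * Real.sqrt (1 + 2 * x)) x := by
    refine (hlin.mul hsq).congr_deriv ?_
    set s := Real.sqrt (1 + 2 * x) with hsdef
    rw [← hs]
    field_simp
    ring
  have hone : HasDerivAt (fun y : ℝ => 1 + y) 1 x := by
    simpa using (hasDerivAt_id x).const_add (1:ℝ)
  have hden : HasDerivAt (fun y : ℝ => r₀ * Real.sqrt (1 + 2 * r₀) * (1 + y))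
      (r₀ * Real.sqrt (1 + 2 * r₀) * 1) x := hone.const_mul _
  have hdenne : r₀ * Real.sqrt (1 + 2 * r₀) * (1 + x) ≠ 0 := by positivity
  have ht2 := hnum.div hden hdenne
  have hnum3 : HasDerivAt (fun y : ℝ => (1 + r₀ - r₀ ^ 2) * (1 + 2 * y))
      ((1 + r₀ - r₀ ^ 2) * 2) x := hlin.const_mul _
  have hden3 : HasDerivAt (fun y : ℝ => r₀ * (1 + 2 * r₀) * (1 + y))
      (r₀ * (1 + 2 * r₀) * 1) x := hone.const_mul _
  have hden3ne : r₀ * (1 + 2 * r₀) * (1 + x) ≠ 0 := by positivity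
  have ht3 := hnum3.div hden3 hden3ne
  have hmain := ((hasDerivAt_const x (1:ℝ)).sub ht2).add ht3
  unfold Ffun
  refine hmain.congr_deriv ?_
  unfold vA vB
  set s := Real.sqrt (1 + 2 * x) with hsdef
  set t₀ := Real.sqrt (1 + 2 * r₀) with htdef
  field_simp
  ring

lemma hdH {r₀ σa σw x : ℝ} (hr₀ : 0 < r₀) (hσa : 0 < σa) (hσw : 0 < σw) (hx : 0 < x) :
    HasDerivAt (Hfun r₀ σa σw)
      (vC r₀ σa σw * (vA r₀ * (3 * x ^ 2 + 2 * x - 3) / (1 + 3 * x) ^ 2 +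
        vB r₀ * (3 * x ^ 2 + 8 * x + 3) /
          (Real.sqrt (1 + 2 * x) * (1 + 2 * x) * (1 + 3 * x) ^ 2))) x := by
  have h12x : (0:ℝ) < 1 + 2 * x := by linarith
  have hs : Real.sqrt (1 + 2 * x) ^ 2 = 1 + 2 * x := Real.sq_sqrt h12x.le
  have hspos : 0 < Real.sqrt (1 + 2 * x) := Real.sqrt_pos.mpr h12x
  have h13x : (0:ℝ) < 1 + 3 * x := by linarith
  have hlin : HasDerivAt (fun y : ℝ => 1 + 2 * y) 2 x := by
    simpa using ((hasDerivAt_id x).const_mul (2:ℝ)).const_add (1:ℝ)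
  have hsq : HasDerivAt (fun y : ℝ => Real.sqrt (1 + 2 * y))
      (2 / (2 * Real.sqrt (1 + 2 * x))) x := hlin.sqrt h12x.ne'
  have hone : HasDerivAt (fun y : ℝ => 1 + y) 1 x := by
    simpa using (hasDerivAt_id x).const_add (1:ℝ)
  have hA : HasDerivAt (fun y : ℝ => vA r₀ * (2 + y)) (vA r₀ * 1) x :=
    (by simpa using (hasDerivAt_id x).const_add (2:ℝ) : HasDerivAt (fun y : ℝ => 2 + y) 1 x).const_mul _
  have hBraw := (hasDerivAt_const x (vB r₀)).div hsq hspos.ne'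
  have hBdiv : HasDerivAt (fun y : ℝ => vB r₀ / Real.sqrt (1 + 2 * y))
      (-(vB r₀) / (Real.sqrt (1 + 2 * x) * (1 + 2 * x))) x := by
    refine hBraw.congr_deriv ?_
    set s := Real.sqrt (1 + 2 * x) with hsdef
    rw [← hs]
    field_simp
    ring
  have hu := hone.mul (hA.sub hBdiv)
  have hden13 : HasDerivAt (fun y : ℝ => 1 + 3 * y) 3 x := by
    simpa using ((hasDerivAt_id x).const_mul (3:ℝ)).const_add (1:ℝ)
  have hq := hu.div hden13 h13x.ne'
  have hfull := hq.const_mul (vC r₀ σa σw)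
  unfold Hfun
  refine hfull.congr_deriv ?_
  simp only [Pi.mul_apply, Pi.sub_apply]
  set s := Real.sqrt (1 + 2 * x) with hsdef
  rw [← hs]
  field_simp
  rw [show x = (s ^ 2 - 1) / 2 by linarith]
  ring

lemma FDv {r₀ σa σw x : ℝ} (hr₀ : 0 < r₀) (hσa : 0 < σa) (hσw : 0 < σw) (hx : 0 < x) :
    (-(vA r₀) * Real.sqrt (1 + 2 * x) * (2 + x) + vB r₀) / (1 + x) ^ 2 * vfun r₀ σa σw x =
      Hfun r₀ σa σw x := by
  have h12x : (0:ℝ) < 1 + 2 * x := by linarith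
  have hspos : 0 < Real.sqrt (1 + 2 * x) := Real.sqrt_pos.mpr h12x
  have h13x : (0:ℝ) < 1 + 3 * x := by linarith
  have h1x : (0:ℝ) < 1 + x := by linarith
  unfold vfun Hfun
  set s := Real.sqrt (1 + 2 * x) with hsdef
  field_simp
  ring

lemma HDv {r₀ σa σw x : ℝ} (hr₀ : 0 < r₀) (hσa : 0 < σa) (hσw : 0 < σw) (hx : 0 < x) :
    vC r₀ σa σw * (vA r₀ * (3 * x ^ 2 + 2 * x - 3) / (1 + 3 * x) ^ 2 +
        vB r₀ * (3 * x ^ 2 + 8 * x + 3) /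
          (Real.sqrt (1 + 2 * x) * (1 + 2 * x) * (1 + 3 * x) ^ 2)) * vfun r₀ σa σw x =
      Gfun r₀ σa σw x := by
  have h12x : (0:ℝ) < 1 + 2 * x := by linarith
  have hs : Real.sqrt (1 + 2 * x) ^ 2 = 1 + 2 * x := Real.sq_sqrt h12x.le
  have hspos : 0 < Real.sqrt (1 + 2 * x) := Real.sqrt_pos.mpr h12x
  have h13x : (0:ℝ) < 1 + 3 * x := by linarith
  unfold vfun Gfun
  set s := Real.sqrt (1 + 2 * x) with hsdef
  rw [← hs]
  field_simp

lemma vODE {r₀ σa σw x : ℝ} (hr₀ : 0 < r₀) (hσa : 0 < σa) (hσw : 0 < σw) (hx : 0 < x) :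
    -(σw ^ 2 * x ^ 2 * (1 + x) * (1 + 2 * x) /
      ((1 + 3 * x) * (σa ^ 2 * (1 + 2 * x) ^ ((3 : ℝ) / 2) * x ^ 2 * (1 + r₀) ^ 2 /
        ((1 + x) ^ 2 * r₀ ^ 2 * (1 + 2 * r₀) ^ ((3 : ℝ) / 2))))) = vfun r₀ σa σw x := by
  have h12x : (0:ℝ) < 1 + 2 * x := by linarith
  have h12r : (0:ℝ) < 1 + 2 * r₀ := by linarith
  have hspos : 0 < Real.sqrt (1 + 2 * x) := Real.sqrt_pos.mpr h12x
  have htpos : 0 < Real.sqrt (1 + 2 * r₀) := Real.sqrt_pos.mpr h12r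
  have h13x : (0:ℝ) < 1 + 3 * x := by linarith
  have h1x : (0:ℝ) < 1 + x := by linarith
  rw [rpow32 h12x.le, rpow32 h12r.le]
  unfold vfun vC
  set s := Real.sqrt (1 + 2 * x) with hsdef
  set t₀ := Real.sqrt (1 + 2 * r₀) with htdef
  field_simp

lemma Gr0_eq {r₀ σa σw : ℝ} (hr₀ : 0 < r₀) (hσa : 0 < σa) (hσw : 0 < σw) :
    Gfun r₀ σa σw r₀ = -(σw ^ 4 * r₀ ^ 4 / (σa ^ 4 * (1 + 3 * r₀))) := by
  have h12r : (0:ℝ) < 1 + 2 * r₀ := by linarith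
  have hs : Real.sqrt (1 + 2 * r₀) ^ 2 = 1 + 2 * r₀ := Real.sq_sqrt h12r.le
  have htpos : 0 < Real.sqrt (1 + 2 * r₀) := Real.sqrt_pos.mpr h12r
  unfold Gfun vA vB vC
  set t₀ := Real.sqrt (1 + 2 * r₀) with htdef
  have ht0 : t₀ ≠ 0 := htpos.ne'
  have h2 : r₀ ≠ 0 := hr₀.ne'
  have h3 : (1:ℝ) + 2 * r₀ ≠ 0 := by linarith
  have h4 : (1:ℝ) + r₀ ≠ 0 := by linarith
  have h5 : (1:ℝ) + 3 * r₀ ≠ 0 := by linarith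
  field_simp
  rw [show r₀ = (t₀ ^ 2 - 1) / 2 by linarith]
  ring

lemma G0_eq {r₀ σa σw : ℝ} (hr₀ : 0 < r₀) (hσa : 0 < σa) (hσw : 0 < σw) :
    Gfun r₀ σa σw 0 = 3 * σw ^ 4 * r₀ ^ 3 * (1 + 2 * r₀) ^ 2 / (σa ^ 4 * (1 + r₀) ^ 4) *
      (Real.sqrt (1 + 2 * r₀) - 1 + r₀ * (r₀ - 1)) := by
  have h12r : (0:ℝ) < 1 + 2 * r₀ := by linarith
  have hs : Real.sqrt (1 + 2 * r₀) ^ 2 = 1 + 2 * r₀ := Real.sq_sqrt h12r.le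
  have htpos : 0 < Real.sqrt (1 + 2 * r₀) := Real.sqrt_pos.mpr h12r
  unfold Gfun vA vB vC
  norm_num [Real.sqrt_one]
  set t₀ := Real.sqrt (1 + 2 * r₀) with htdef
  have h2 : r₀ ≠ 0 := hr₀.ne'
  have h3 : (1:ℝ) + 2 * r₀ ≠ 0 := by linarith
  have h4 : (1:ℝ) + r₀ ≠ 0 := by linarith
  field_simp
  rw [show r₀ = (t₀ ^ 2 - 1) / 2 by linarith]
  ring

lemma sqrt_ineq {r₀ : ℝ} (hr₀ : 0 < r₀) :
    0 < Real.sqrt (1 + 2 * r₀) - 1 + r₀ * (r₀ - 1) := by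
  have h12r : (0:ℝ) < 1 + 2 * r₀ := by linarith
  have hs : Real.sqrt (1 + 2 * r₀) ^ 2 = 1 + 2 * r₀ := Real.sq_sqrt h12r.le
  have htpos : 0 < Real.sqrt (1 + 2 * r₀) := Real.sqrt_pos.mpr h12r
  set s := Real.sqrt (1 + 2 * r₀) with hsdef
  have hs1 : 1 < s := by nlinarith
  rcases le_or_gt (1 + r₀ - r₀ ^ 2) 0 with h | h
  · nlinarith
  · have hkey : s ^ 2 - (1 + r₀ - r₀ ^ 2) ^ 2 = r₀ ^ 2 * (1 + 2 * r₀ - r₀ ^ 2) := by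
      linear_combination hs
    have hq : 0 < 1 + 2 * r₀ - r₀ ^ 2 := by nlinarith
    have h2 : 0 < s ^ 2 - (1 + r₀ - r₀ ^ 2) ^ 2 := by rw [hkey]; positivity
    nlinarith

theorem stmt_15 (T r₀ σa σw : ℝ) (hT : 0 < T) (hr₀ : 0 < r₀) (hσa : 0 < σa)
    (hσw : 0 < σw)
    (r S1 f f1 f2 : ℝ → ℝ)
    (hr0 : r 0 = r₀)
    (hrange : ∀ t ∈ Set.Ico 0 T, r t ∈ Set.Ioc 0 r₀)
    (hrT : Filter.Tendsto r (nhdsWithin T (Set.Iio T)) (nhds 0))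
    (hS1 : ∀ t, S1 t = σa ^ 2 * (1 + 2 * r t) ^ ((3 : ℝ) / 2) * r t ^ 2 * (1 + r₀) ^ 2 /
        ((1 + r t) ^ 2 * r₀ ^ 2 * (1 + 2 * r₀) ^ ((3 : ℝ) / 2)))
    (hrODE : ∀ t ∈ Set.Ico 0 T,
      HasDerivAt r
        (-(σw ^ 2 * r t ^ 2 * (1 + r t) * (1 + 2 * r t) / ((1 + 3 * r t) * S1 t))) t)
    (hf : ∀ t ∈ Set.Ico 0 T,
      f t = 1 - (1 + 2 * r t) ^ ((3 : ℝ) / 2) /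
            (r₀ * Real.sqrt (1 + 2 * r₀) * (1 + r t)) +
          (1 + r₀ - r₀ ^ 2) * (1 + 2 * r t) / (r₀ * (1 + 2 * r₀) * (1 + r t)))
    (hf1 : ∀ t ∈ Set.Ico 0 T, HasDerivAt f (f1 t) t)
    (hf2 : ∀ t ∈ Set.Ico 0 T, HasDerivAt f1 (f2 t) t) :
    f2 0 = -(σw ^ 4 * r₀ ^ 4 / (σa ^ 4 * (1 + 3 * r₀))) ∧
      f2 0 < 0 ∧
      Filter.Tendsto f2 (nhdsWithin T (Set.Iio T))
        (nhds (3 * σw ^ 4 * r₀ ^ 3 * (1 + 2 * r₀) ^ 2 / (σa ^ 4 * (1 + r₀) ^ 4) *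
          (Real.sqrt (1 + 2 * r₀) - 1 + r₀ * (r₀ - 1)))) ∧
      0 < 3 * σw ^ 4 * r₀ ^ 3 * (1 + 2 * r₀) ^ 2 / (σa ^ 4 * (1 + r₀) ^ 4) *
          (Real.sqrt (1 + 2 * r₀) - 1 + r₀ * (r₀ - 1)) := by
  have h0T : (0:ℝ) ∈ Set.Ico 0 T := ⟨le_refl 0, hT⟩
  -- r has derivative vfun (r t)
  have hr' : ∀ t ∈ Set.Ico 0 T, HasDerivAt r (vfun r₀ σa σw (r t)) t := by
    intro t ht
    have hpos := (hrange t ht).1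
    have := hrODE t ht
    rw [hS1 t] at this
    rwa [vODE hr₀ hσa hσw hpos] at this
  -- f1 = Hfun ∘ r on Ico 0 T
  have key1 : ∀ t ∈ Set.Ico 0 T, f1 t = Hfun r₀ σa σw (r t) := by
    intro t ht
    have hpos := (hrange t ht).1
    have hF := hdF hr₀ hpos
    have hcomp := hF.comp t (hr' t ht)
    have heq : ∀ s ∈ Set.Ico 0 T, f s = (Ffun r₀ ∘ r) s := by
      intro s hs
      have hpos' := (hrange s hs).1
      rw [hf s hs]
      show _ = Ffun r₀ (r s)
      unfold Ffun
      rw [rpow32 (by linarith : (0:ℝ) ≤ 1 + 2 * r s)]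
    have hcomp' : HasDerivAt (Ffun r₀ ∘ r) (Hfun r₀ σa σw (r t)) t := by
      rw [← FDv hr₀ hσa hσw hpos]
      exact hcomp
    exact deriv_uniq ht heq (hf1 t ht) hcomp'
  -- f2 = Gfun ∘ r on Ico 0 T
  have key2 : ∀ t ∈ Set.Ico 0 T, f2 t = Gfun r₀ σa σw (r t) := by
    intro t ht
    have hpos := (hrange t ht).1
    have hH := hdH hr₀ hσa hσw hpos
    have hcomp := hH.comp t (hr' t ht)
    have heq : ∀ s ∈ Set.Ico 0 T, f1 s = (Hfun r₀ σa σw ∘ r) s := fun s hs => key1 s hs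
    have hcomp' : HasDerivAt (Hfun r₀ σa σw ∘ r) (Gfun r₀ σa σw (r t)) t := by
      rw [← HDv hr₀ hσa hσw hpos]
      exact hcomp
    exact deriv_uniq ht heq (hf2 t ht) hcomp'
  have hval : f2 0 = -(σw ^ 4 * r₀ ^ 4 / (σa ^ 4 * (1 + 3 * r₀))) := by
    rw [key2 0 h0T, hr0, Gr0_eq hr₀ hσa hσw]
  refine ⟨hval, ?_, ?_, ?_⟩
  · rw [hval]
    have : 0 < σw ^ 4 * r₀ ^ 4 / (σa ^ 4 * (1 + 3 * r₀)) := by positivity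
    linarith
  · -- limit
    have hc : ContinuousAt (Gfun r₀ σa σw) 0 := by
      unfold Gfun
      have hcs : ContinuousAt (fun x : ℝ => Real.sqrt (1 + 2 * x)) 0 := by fun_prop
      apply ContinuousAt.neg
      apply ContinuousAt.mul
      · exact ContinuousAt.div (by fun_prop) (by fun_prop) (by norm_num)
      · apply ContinuousAt.add
        · exact ContinuousAt.div (by fun_prop) hcs (by simp)
        · exact ContinuousAt.div (by fun_prop) (by fun_prop) (by norm_num)
    have htends : Filter.Tendsto (Gfun r₀ σa σw ∘ r) (nhdsWithin T (Set.Iio T))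
        (nhds (Gfun r₀ σa σw 0)) := hc.tendsto.comp hrT
    rw [G0_eq hr₀ hσa hσw] at htends
    have hev : f2 =ᶠ[nhdsWithin T (Set.Iio T)] (Gfun r₀ σa σw ∘ r) := by
      filter_upwards [Ioo_mem_nhdsLT (by linarith : T/2 < T)]
        with t ht
      exact key2 t ⟨by linarith [ht.1], ht.2⟩
    exact Filter.Tendsto.congr' hev.symm htends
  · exact mul_pos (by positivity) (sqrt_ineq hr₀)
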